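/- If α < ω₂ and every ω₁-Borel subset of 2^ω belongs to ⋃_{β<α} Π*(β), then there exists β < α with Π*(β) = Σ*(β); that is, a bounded ω₁-Borel hierarchy must have a top class. -/

import Mathlib

open Cardinal Set

abbrev CantorSp : Type := ℕ → Bool
abbrev W1 : Type := (Cardinal.aleph 1).ord.ToType
abbrev Big : Type := W1 → Bool

/-- The pair (Σ*(α), Π*(α)) of classes of the ι-indexed Borel hierarchy on X:
level 0 is the clopen sets, Σ*(α) consists of ι-indexed unions of sets from Π*(β), β < α,
and Π*(α) consists of ι-indexed intersections of sets from Σ*(β), β < α. -/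
noncomputable def SigPi (X : Type) [TopologicalSpace X] (ι : Type) :
    Ordinal → Set (Set X) × Set (Set X) :=
  WellFounded.fix (wellFounded_lt (α := Ordinal)) fun α ih =>
    if α = 0 then ({S | IsClopen S}, {S | IsClopen S})
    else
      ({S | ∃ A : ι → Set X, (∀ i, ∃ β, ∃ h : β < α, A i ∈ (ih β h).2) ∧ S = ⋃ i, A i},
       {S | ∃ A : ι → Set X, (∀ i, ∃ β, ∃ h : β < α, A i ∈ (ih β h).1) ∧ S = ⋂ i, A i})

noncomputable def SigmaStar (X : Type) [TopologicalSpace X] (ι : Type) (α : Ordinal) :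
    Set (Set X) := (SigPi X ι α).1

noncomputable def PiStar (X : Type) [TopologicalSpace X] (ι : Type) (α : Ordinal) :
    Set (Set X) := (SigPi X ι α).2


/-- The ω₁-Borel subsets of Cantor space: the smallest family containing the clopen sets and
closed under ω₁-unions and ω₁-intersections. -/
inductive OmegaOneBorel : Set CantorSp → Prop
  | clopen {S : Set CantorSp} : IsClopen S → OmegaOneBorel S
  | iUnion (A : W1 → Set CantorSp) : (∀ i, OmegaOneBorel (A i)) → OmegaOneBorel (⋃ i, A i)
  | iInter (A : W1 → Set CantorSp) : (∀ i, OmegaOneBorel (A i)) → OmegaOneBorel (⋂ i, A i)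

lemma SigPi_def (X : Type) [TopologicalSpace X] (ι : Type) (α : Ordinal) :
    SigPi X ι α =
      if α = 0 then ({S | IsClopen S}, {S | IsClopen S})
      else
        ({S | ∃ A : ι → Set X, (∀ i, ∃ β, ∃ _ : β < α, A i ∈ PiStar X ι β) ∧ S = ⋃ i, A i},
         {S | ∃ A : ι → Set X, (∀ i, ∃ β, ∃ _ : β < α, A i ∈ SigmaStar X ι β) ∧ S = ⋂ i, A i}) := by
  rw [SigPi, WellFounded.fix_eq]
  rfl

lemma SigmaStar_zero (X : Type) [TopologicalSpace X] (ι : Type) :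
    SigmaStar X ι 0 = {S | IsClopen S} := by
  rw [SigmaStar, SigPi_def]; simp

lemma PiStar_zero (X : Type) [TopologicalSpace X] (ι : Type) :
    PiStar X ι 0 = {S | IsClopen S} := by
  rw [PiStar, SigPi_def]; simp

lemma mem_SigmaStar_iff {X : Type} [TopologicalSpace X] {ι : Type} {α : Ordinal} (hα : α ≠ 0)
    {S : Set X} : S ∈ SigmaStar X ι α ↔
      ∃ A : ι → Set X, (∀ i, ∃ β, ∃ _ : β < α, A i ∈ PiStar X ι β) ∧ S = ⋃ i, A i := by
  rw [SigmaStar, SigPi_def]; simp [hα]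

lemma mem_PiStar_iff {X : Type} [TopologicalSpace X] {ι : Type} {α : Ordinal} (hα : α ≠ 0)
    {S : Set X} : S ∈ PiStar X ι α ↔
      ∃ A : ι → Set X, (∀ i, ∃ β, ∃ _ : β < α, A i ∈ SigmaStar X ι β) ∧ S = ⋂ i, A i := by
  rw [PiStar, SigPi_def]; simp [hα]

lemma mk_W1 : #W1 = Cardinal.aleph 1 := mk_ord_toType _

instance : Infinite W1 := by
  rw [Cardinal.infinite_iff, mk_W1]; exact aleph0_le_aleph 1

section structural
variable {X : Type} [TopologicalSpace X] {ι : Type} [Nonempty ι]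

lemma clopen_mem_PiStar {S : Set X} (hS : IsClopen S) (α : Ordinal) :
    S ∈ PiStar X ι α := by
  rcases eq_or_ne α 0 with rfl | hα
  · rw [PiStar_zero]; exact hS
  · rw [mem_PiStar_iff hα]
    refine ⟨fun _ => S, fun i => ⟨0, pos_iff_ne_zero.2 hα, ?_⟩, (iInter_const S).symm⟩
    rw [SigmaStar_zero]; exact hS

lemma clopen_mem_SigmaStar {S : Set X} (hS : IsClopen S) (α : Ordinal) :
    S ∈ SigmaStar X ι α := by
  rcases eq_or_ne α 0 with rfl | hα
  · rw [SigmaStar_zero]; exact hS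
  · rw [mem_SigmaStar_iff hα]
    refine ⟨fun _ => S, fun i => ⟨0, pos_iff_ne_zero.2 hα, ?_⟩, (iUnion_const S).symm⟩
    rw [PiStar_zero]; exact hS

lemma PiStar_mono {β γ : Ordinal} (hβγ : β ≤ γ) :
    PiStar X ι β ⊆ PiStar X ι γ := by
  intro S hS
  rcases eq_or_ne β 0 with rfl | hβ
  · rw [PiStar_zero] at hS; exact clopen_mem_PiStar hS γ
  · have hγ : γ ≠ 0 := fun hg => hβ (le_antisymm (hg ▸ hβγ) (zero_le (a := β)))
    rw [mem_PiStar_iff hβ] at hS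
    rw [mem_PiStar_iff hγ]
    obtain ⟨A, hA, rfl⟩ := hS
    exact ⟨A, fun i => by obtain ⟨δ, hδ, hm⟩ := hA i; exact ⟨δ, lt_of_lt_of_le hδ hβγ, hm⟩, rfl⟩

lemma SigmaStar_mono {β γ : Ordinal} (hβγ : β ≤ γ) :
    SigmaStar X ι β ⊆ SigmaStar X ι γ := by
  intro S hS
  rcases eq_or_ne β 0 with rfl | hβ
  · rw [SigmaStar_zero] at hS; exact clopen_mem_SigmaStar hS γ
  · have hγ : γ ≠ 0 := fun hg => hβ (le_antisymm (hg ▸ hβγ) (zero_le (a := β)))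
    rw [mem_SigmaStar_iff hβ] at hS
    rw [mem_SigmaStar_iff hγ]
    obtain ⟨A, hA, rfl⟩ := hS
    exact ⟨A, fun i => by obtain ⟨δ, hδ, hm⟩ := hA i; exact ⟨δ, lt_of_lt_of_le hδ hβγ, hm⟩, rfl⟩

lemma compl_mem (α : Ordinal) :
    (∀ S ∈ SigmaStar X ι α, Sᶜ ∈ PiStar X ι α) ∧
    (∀ S ∈ PiStar X ι α, Sᶜ ∈ SigmaStar X ι α) := by
  induction α using Ordinal.induction with
  | _ α IH =>
    rcases eq_or_ne α 0 with rfl | hα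
    · rw [SigmaStar_zero, PiStar_zero]
      exact ⟨fun S hS => hS.compl, fun S hS => hS.compl⟩
    · constructor
      · intro S hS
        rw [mem_SigmaStar_iff hα] at hS
        obtain ⟨A, hA, rfl⟩ := hS
        rw [compl_iUnion, mem_PiStar_iff hα]
        refine ⟨fun i => (A i)ᶜ, fun i => ?_, rfl⟩
        obtain ⟨δ, hδ, hm⟩ := hA i
        exact ⟨δ, hδ, (IH δ hδ).2 _ hm⟩
      · intro S hS
        rw [mem_PiStar_iff hα] at hS
        obtain ⟨A, hA, rfl⟩ := hS
        rw [compl_iInter, mem_SigmaStar_iff hα]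
        refine ⟨fun i => (A i)ᶜ, fun i => ?_, rfl⟩
        obtain ⟨δ, hδ, hm⟩ := hA i
        exact ⟨δ, hδ, (IH δ hδ).1 _ hm⟩

variable {Y : Type} [TopologicalSpace Y]

lemma preimage_mem {f : Y → X} (hf : Continuous f) (α : Ordinal) :
    (∀ S ∈ SigmaStar X ι α, f ⁻¹' S ∈ SigmaStar Y ι α) ∧
    (∀ S ∈ PiStar X ι α, f ⁻¹' S ∈ PiStar Y ι α) := by
  induction α using Ordinal.induction with
  | _ α IH =>
    rcases eq_or_ne α 0 with rfl | hα
    · simp only [SigmaStar_zero, PiStar_zero, mem_setOf_eq]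
      exact ⟨fun S hS => hS.preimage hf, fun S hS => hS.preimage hf⟩
    · constructor
      · intro S hS
        rw [mem_SigmaStar_iff hα] at hS
        obtain ⟨A, hA, rfl⟩ := hS
        rw [preimage_iUnion, mem_SigmaStar_iff hα]
        refine ⟨fun i => f ⁻¹' (A i), fun i => ?_, rfl⟩
        obtain ⟨δ, hδ, hm⟩ := hA i
        exact ⟨δ, hδ, (IH δ hδ).2 _ hm⟩
      · intro S hS
        rw [mem_PiStar_iff hα] at hS
        obtain ⟨A, hA, rfl⟩ := hS
        rw [preimage_iInter, mem_PiStar_iff hα]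
        refine ⟨fun i => f ⁻¹' (A i), fun i => ?_, rfl⟩
        obtain ⟨δ, hδ, hm⟩ := hA i
        exact ⟨δ, hδ, (IH δ hδ).1 _ hm⟩

end structural

open Classical in
lemma iInter_ite_eq {X : Type} (A B : Set X) (w₀ : W1) :
    ⋂ w : W1, (if w = w₀ then A else B) = A ∩ B := by
  obtain ⟨w₁, hw₁⟩ := exists_ne w₀
  apply subset_antisymm
  · intro x hx
    have h0 := mem_iInter.1 hx w₀
    have h1 := mem_iInter.1 hx w₁
    simp only [if_pos rfl] at h0
    simp only [if_neg hw₁] at h1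
    exact ⟨h0, h1⟩
  · intro x hx
    apply mem_iInter.2
    intro w
    by_cases hw : w = w₀ <;> simp [hw, hx.1, hx.2]


open Classical in
lemma borel_inter {A B : Set CantorSp} (hA : OmegaOneBorel A) (hB : OmegaOneBorel B) :
    OmegaOneBorel (A ∩ B) := by
  obtain ⟨w₀⟩ := (inferInstance : Nonempty W1)
  rw [← iInter_ite_eq A B w₀]
  exact OmegaOneBorel.iInter _ (fun w => by by_cases hw : w = w₀ <;> simp [hw, hA, hB])

lemma borel_preimage {f : CantorSp → CantorSp} (hf : Continuous f) {S : Set CantorSp}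
    (hS : OmegaOneBorel S) : OmegaOneBorel (f ⁻¹' S) := by
  induction hS with
  | clopen h => exact OmegaOneBorel.clopen (h.preimage hf)
  | iUnion A hA IH => rw [preimage_iUnion]; exact OmegaOneBorel.iUnion _ IH
  | iInter A hA IH => rw [preimage_iInter]; exact OmegaOneBorel.iInter _ IH

lemma mem_borel {α : Ordinal} :
    (∀ S ∈ SigmaStar CantorSp W1 α, OmegaOneBorel S) ∧
    (∀ S ∈ PiStar CantorSp W1 α, OmegaOneBorel S) := by
  induction α using Ordinal.induction with
  | _ α IH =>
    rcases eq_or_ne α 0 with rfl | hα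
    · rw [SigmaStar_zero, PiStar_zero]
      exact ⟨fun S hS => OmegaOneBorel.clopen hS, fun S hS => OmegaOneBorel.clopen hS⟩
    · constructor
      · intro S hS
        rw [mem_SigmaStar_iff hα] at hS
        obtain ⟨A, hA, rfl⟩ := hS
        exact OmegaOneBorel.iUnion _ fun i => by
          obtain ⟨δ, hδ, hm⟩ := hA i; exact (IH δ hδ).2 _ hm
      · intro S hS
        rw [mem_PiStar_iff hα] at hS
        obtain ⟨A, hA, rfl⟩ := hS
        exact OmegaOneBorel.iInter _ fun i => by
          obtain ⟨δ, hδ, hm⟩ := hA i; exact (IH δ hδ).1 _ hm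

lemma piStar_inter {X : Type} [TopologicalSpace X] {δ : Ordinal} (hδ : δ ≠ 0)
    {S T : Set X} (hS : S ∈ PiStar X W1 δ) (hT : T ∈ PiStar X W1 δ) :
    S ∩ T ∈ PiStar X W1 δ := by
  rw [mem_PiStar_iff hδ] at hS hT ⊢
  obtain ⟨A, hA, rfl⟩ := hS
  obtain ⟨C, hC, rfl⟩ := hT
  have hcard : #(W1 ⊕ W1) = #W1 := by
    simp [Cardinal.mk_sum, mk_W1, Cardinal.add_eq_self (aleph0_le_aleph 1)]
  obtain ⟨e⟩ := Cardinal.eq.mp hcard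
  refine ⟨fun w => Sum.elim A C (e.symm w), fun w => ?_, ?_⟩
  · rcases hs : e.symm w with i | j
    · obtain ⟨β, hβ, hm⟩ := hA i; exact ⟨β, hβ, by show Sum.elim A C (e.symm w) ∈ _; rw [hs]; exact hm⟩
    · obtain ⟨β, hβ, hm⟩ := hC j; exact ⟨β, hβ, by show Sum.elim A C (e.symm w) ∈ _; rw [hs]; exact hm⟩
  · rw [e.symm.surjective.iInter_comp (Sum.elim A C), iInter_sum]
    simp

lemma nat_iInter_clopen {X : Type} [TopologicalSpace X] (Q : ℕ → Set X)
    (hQ : ∀ n, IsClopen (Q n)) : ⋂ n, Q n ∈ PiStar X W1 1 := by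
  set g : W1 → ℕ := Function.invFun (Infinite.natEmbedding W1) with hg
  have hgs : Function.Surjective g := Function.invFun_surjective (Infinite.natEmbedding W1).injective
  rw [mem_PiStar_iff one_ne_zero]
  refine ⟨fun w => Q (g w), fun w => ⟨0, zero_lt_one, ?_⟩, (hgs.iInter_comp Q).symm⟩
  rw [SigmaStar_zero]; exact hQ (g w)

def oddF : CantorSp → CantorSp := fun y n => y (2 * n + 1)

def embF (x : CantorSp) : CantorSp → CantorSp :=
  fun y m => if m % 2 = 0 then x (m / 2) else y (m / 2)

def Pset (x : CantorSp) : Set CantorSp := {y | ∀ n, y (2 * n) = x n}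

lemma continuous_oddF : Continuous oddF :=
  continuous_pi fun n => continuous_apply (2 * n + 1)

lemma continuous_embF (x : CantorSp) : Continuous (embF x) := by
  apply continuous_pi
  intro m
  unfold embF
  split_ifs
  · exact continuous_const
  · exact continuous_apply (m / 2)

lemma oddF_embF (x : CantorSp) (y : CantorSp) : oddF (embF x y) = y := by
  funext n
  have h1 : (2 * n + 1) % 2 ≠ 0 := by omega
  have h2 : (2 * n + 1) / 2 = n := by omega
  simp [oddF, embF, h1, h2]

lemma embF_mem_Pset (x : CantorSp) (y : CantorSp) : embF x y ∈ Pset x := by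
  intro n
  have h1 : (2 * n) % 2 = 0 := by omega
  have h2 : (2 * n) / 2 = n := by omega
  simp [embF, h1, h2]

lemma Pset_mem_Pi1 (x : CantorSp) : Pset x ∈ PiStar CantorSp W1 1 := by
  have : Pset x = ⋂ n : ℕ, {y : CantorSp | y (2 * n) = x n} := by
    ext y; simp [Pset, mem_iInter]
  rw [this]
  exact nat_iInter_clopen _ fun n =>
    (isClopen_discrete {x n}).preimage (continuous_apply (2 * n))

lemma Pset_disjoint {x x' : CantorSp} (hxx : x ≠ x') : Pset x ∩ Pset x' = ∅ := by
  by_contra hne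
  obtain ⟨z, hz, hz'⟩ := nonempty_iff_ne_empty.2 hne
  apply hxx
  funext n
  rw [← hz n, ← hz' n]


/-- A bounded ω₁-Borel hierarchy has a top class: if `α < ω₂` and every ω₁-Borel set is in
`⋃_{β<α} Π*(β)` then `Π*(β) = Σ*(β)` for some `β < α`. -/
theorem bounded_hierarchy_top_class (α : Ordinal) (hα : α < (Cardinal.aleph 2).ord)
    (h : ∀ B : Set CantorSp, OmegaOneBorel B → ∃ β < α, B ∈ PiStar CantorSp W1 β) :
    ∃ β < α, PiStar CantorSp W1 β = SigmaStar CantorSp W1 β := by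
  by_contra hc
  push_neg at hc
  -- Step A: arbitrarily high ranks
  have stepA : ∀ β < α, ∃ B, OmegaOneBorel B ∧ B ∉ PiStar CantorSp W1 β := by
    intro β hβ
    by_contra hA
    push_neg at hA
    apply hc β hβ
    apply Set.Subset.antisymm
    · intro S hS
      have hcompl : Sᶜ ∈ SigmaStar CantorSp W1 β := (compl_mem β).2 S hS
      have hb : OmegaOneBorel Sᶜ := mem_borel.1 _ hcompl
      have : Sᶜ ∈ PiStar CantorSp W1 β := hA _ hb
      have := (compl_mem β).2 _ this
      rwa [compl_compl] at this
    · intro S hS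
      exact hA S (mem_borel.1 _ hS)
  -- α is positive
  obtain ⟨β₀, hβ₀, -⟩ := h ∅ (OmegaOneBorel.clopen isClopen_empty)
  have hαpos : α ≠ 0 := fun h0 => by simp [h0] at hβ₀
  rcases Ordinal.zero_or_succ_or_isSuccLimit α with rfl | ⟨δ, rfl⟩ | hlim
  · exact hαpos rfl
  · -- successor case
    obtain ⟨B, hB, hBn⟩ := stepA δ (Order.lt_succ δ)
    obtain ⟨β, hβ, hBm⟩ := h B hB
    exact hBn (PiStar_mono (Order.lt_succ_iff.1 hβ) hBm)
  · -- limit case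
    -- surjection from W1 onto the ordinals below α
    have hcard : α.card ≤ Cardinal.aleph 1 := by
      have h2 : α.card < Cardinal.aleph 2 := Cardinal.lt_ord.1 hα
      have : Cardinal.aleph 2 = Order.succ (Cardinal.aleph 1) := by
        have : (2 : Ordinal) = Order.succ 1 := by rw [← Ordinal.add_one_eq_succ]; norm_num
        rw [this, Cardinal.aleph_succ]
      rw [this, Order.lt_succ_iff] at h2
      exact h2
    have hne : Nonempty α.ToType := Ordinal.toType_nonempty_iff_ne_zero.2 hαpos
    have hle : Cardinal.lift.{0} #α.ToType ≤ Cardinal.lift #W1 := by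
      rw [Cardinal.mk_toType, mk_W1, Cardinal.lift_aleph, Ordinal.lift_one]
      simpa using hcard
    obtain ⟨emb0⟩ := Cardinal.lift_mk_le'.1 hle
    have hg : Function.Surjective (Function.invFun emb0) :=
      Function.invFun_surjective emb0.injective
    set f : W1 → Set.Iio α := fun w => (Ordinal.ToType.mk (o := α)).symm (Function.invFun emb0 w)
      with hf
    have hfsurj : ∀ γ < α, ∃ w, (f w : Ordinal) = γ := by
      intro γ hγ
      obtain ⟨w, hw⟩ := hg ((Ordinal.ToType.mk (o := α)) ⟨γ, hγ⟩)
      exact ⟨w, by rw [hf]; simp [hw]⟩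
    -- choose witnesses of high rank
    have hch : ∀ w : W1, ∃ B, OmegaOneBorel B ∧ B ∉ PiStar CantorSp W1 (f w) :=
      fun w => stepA _ (f w).2
    choose B hB1 hB2 using hch
    -- ω₁ many distinct points of Cantor space
    have hx : #W1 ≤ #CantorSp := by
      rw [mk_W1, Cardinal.mk_arrow]
      simp only [Cardinal.mk_bool, Cardinal.lift_ofNat, Cardinal.mk_nat, Cardinal.lift_aleph0]
      rw [Cardinal.two_power_aleph0]
      exact Cardinal.aleph_one_le_continuum
    obtain ⟨x⟩ := (Cardinal.le_def _ _).1 hx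
    -- the join
    set J : Set CantorSp := ⋃ w, (oddF ⁻¹' (B w) ∩ Pset (x w)) with hJ
    have hJb : OmegaOneBorel J :=
      OmegaOneBorel.iUnion _ fun w =>
        borel_inter (borel_preimage continuous_oddF (hB1 w))
          ((mem_borel (α := (1 : Ordinal.{0}))).2 _ (Pset_mem_Pi1 (x w)))
    obtain ⟨γ, hγ, hJpi⟩ := h J hJb
    obtain ⟨w, hw⟩ := hfsurj (Order.succ γ) (hlim.succ_lt hγ)
    -- J ∩ Pset (x w) is Π*(succ γ)
    have hP1 : Pset (x w) ∈ PiStar CantorSp W1 (Order.succ γ) :=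
      PiStar_mono (Order.one_le_iff_pos.2 (Order.bot_lt_succ γ)) (Pset_mem_Pi1 (x w))
    have hJP : J ∩ Pset (x w) ∈ PiStar CantorSp W1 (Order.succ γ) :=
      piStar_inter (Order.bot_lt_succ γ).ne'
        (PiStar_mono (Order.le_succ γ) hJpi) hP1
    -- identify J ∩ Pset (x w)
    have hsep : J ∩ Pset (x w) = oddF ⁻¹' (B w) ∩ Pset (x w) := by
      apply Set.Subset.antisymm
      · rintro z ⟨hzJ, hzP⟩
        obtain ⟨w', hz'⟩ := mem_iUnion.1 hzJ
        rcases eq_or_ne w' w with rfl | hww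
        · exact ⟨hz'.1, hzP⟩
        · exfalso
          have hxx : x w' ≠ x w := fun hh => hww (x.injective hh)
          have : z ∈ Pset (x w') ∩ Pset (x w) := ⟨hz'.2, hzP⟩
          rw [Pset_disjoint hxx] at this
          exact this
      · intro z hz
        exact ⟨mem_iUnion.2 ⟨w, hz⟩, hz.2⟩
    -- pull back along embF
    have hpull : B w = embF (x w) ⁻¹' (J ∩ Pset (x w)) := by
      rw [hsep, preimage_inter]
      have h1 : embF (x w) ⁻¹' (oddF ⁻¹' (B w)) = B w := by
        ext y; simp [mem_preimage, oddF_embF]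
      have h2 : embF (x w) ⁻¹' (Pset (x w)) = Set.univ :=
        eq_univ_of_forall fun y => embF_mem_Pset (x w) y
      rw [h1, h2, inter_univ]
    have : B w ∈ PiStar CantorSp W1 (Order.succ γ) := by
      rw [hpull]
      exact (preimage_mem (continuous_embF (x w)) (Order.succ γ)).2 _ hJP
    exact hB2 w (by rw [hw]; exact this)
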